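/- For n ≥ 1, the q-Stirling subset number satisfies {n brace 2}_q = (1/2) Σ_{j=1}^{n-1} γ_n / (γ_j γ_{n-j}), and the number of n×n idempotent matrices over F_q equals 2·{n brace 2}_q + 2. -/

import Mathlib

/-- The order of `GL_m(F_q)`. -/
def gma (q m : ℕ) : ℕ := ∏ i ∈ Finset.range m, (q ^ m - q ^ i)

/-- The `q`-Stirling subset number `{n brace 2}_q`: the number of unordered direct sum
decompositions of `F_q^n` into two nonzero subspaces. -/
noncomputable def qStirlingTwo (n : ℕ) (F : Type) [Field F] [Fintype F] : ℕ :=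
  Nat.card {D : Finset (Submodule F (Fin n → F)) //
    D.card = 2 ∧ (∀ V ∈ D, V ≠ ⊥) ∧
    sSupIndep (D : Set (Submodule F (Fin n → F))) ∧
    sSup (D : Set (Submodule F (Fin n → F))) = ⊤}

open Submodule Module

section Aux

/-! ### Generic counting helpers -/

lemma card_eq_sum_card_fibers {α β : Type*} [Finite α] [Fintype β] (f : α → β) :
    Nat.card α = ∑ b : β, Nat.card {a // f a = b} := by
  classical
  cases nonempty_fintype α
  simp_rw [Nat.card_eq_fintype_card]
  rw [← Fintype.card_sigma]
  exact Fintype.card_congr (Equiv.sigmaFiberEquiv f).symm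

lemma card_eq_mul_card {α β : Type*} [Finite α] [Finite β] (f : α → β) (k : ℕ)
    (h : ∀ b, Nat.card {a // f a = b} = k) : Nat.card α = k * Nat.card β := by
  classical
  cases nonempty_fintype β
  rw [card_eq_sum_card_fibers f]
  simp [h, Finset.sum_const, mul_comm, Nat.card_eq_fintype_card]

lemma card_sigma_eq {ι : Type*} [Finite ι] {β : ι → Type*} [∀ i, Finite (β i)] (k : ℕ)
    (h : ∀ i, Nat.card (β i) = k) : Nat.card ((i : ι) × β i) = k * Nat.card ι := by
  classical
  letI := Fintype.ofFinite ι
  letI := fun i => Fintype.ofFinite (β i)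
  simp_rw [Nat.card_eq_fintype_card, Fintype.card_sigma]
  have h' : ∀ i, Fintype.card (β i) = k := fun i => by rw [← Nat.card_eq_fintype_card, h i]
  simp [h', Finset.sum_const, mul_comm]

instance finite_submodule {F M : Type*} [Field F] [AddCommGroup M] [Module F M] [Finite M] :
    Finite (Submodule F M) :=
  Finite.of_injective (fun p => (p : Set M)) SetLike.coe_injective

/-! ### Arithmetic identities for `gma` -/

lemma gma_split (q a b : ℕ) :
    gma q (a + b) = (∏ i ∈ Finset.range a, (q ^ (a + b) - q ^ i)) * (q ^ (a * b) * gma q b) := by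
  rw [gma, Finset.prod_range_add]
  congr 1
  have h : ∀ i, q ^ (a + b) - q ^ (a + i) = q ^ a * (q ^ b - q ^ i) := fun i => by
    rw [Nat.mul_sub, ← pow_add, ← pow_add]
  simp_rw [h]
  rw [Finset.prod_mul_distrib, Finset.prod_const, Finset.card_range, ← pow_mul, gma]

lemma gma_pos (q m : ℕ) (hq : 1 < q) : 0 < gma q m := by
  apply Finset.prod_pos
  intro i hi
  have : q ^ i < q ^ m := Nat.pow_lt_pow_right hq (Finset.mem_range.mp hi)
  omega

/-! ### Idempotents and complementary pairs -/

lemma isCompl_range_ker_of_idem {F : Type} [Field F] {M : Type*} [AddCommGroup M] [Module F M]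
    (f : Module.End F M) (hf : f ∘ₗ f = f) :
    IsCompl (LinearMap.range f) (LinearMap.ker f) := by
  constructor
  · rw [disjoint_iff]
    ext x
    simp only [Submodule.mem_inf, LinearMap.mem_range, LinearMap.mem_ker, Submodule.mem_bot]
    constructor
    · rintro ⟨⟨y, rfl⟩, hk⟩
      have : f (f y) = f y := LinearMap.ext_iff.mp hf y
      rw [← this, hk]
    · rintro rfl; exact ⟨⟨0, map_zero _⟩, map_zero _⟩
  · rw [codisjoint_iff, eq_top_iff]
    intro x _
    have h0 : f (x - f x) = 0 := by
      have h : f (f x) = f x := LinearMap.ext_iff.mp hf x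
      simp [map_sub, h]
    have hx : x = f x + (x - f x) := by abel
    rw [hx]
    exact Submodule.add_mem_sup ⟨x, rfl⟩ h0

/-- Idempotent endomorphisms correspond to ordered complementary pairs. -/
noncomputable def idemEquivPairs (n : ℕ) (F : Type) [Field F] [Fintype F] :
    {f : Module.End F (Fin n → F) // f ∘ₗ f = f} ≃
      {p : Submodule F (Fin n → F) × Submodule F (Fin n → F) // IsCompl p.1 p.2} where
  toFun f := ⟨(LinearMap.range f.1, LinearMap.ker f.1), isCompl_range_ker_of_idem f.1 f.2⟩
  invFun p := ⟨p.1.1.subtype ∘ₗ p.1.1.projectionOnto p.1.2 p.2, by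
    apply LinearMap.ext; intro x
    simp [Submodule.projectionOnto_projection]⟩
  left_inv := by
    rintro ⟨f, hf⟩
    apply Subtype.ext
    apply LinearMap.ext; intro x
    have h := isCompl_range_ker_of_idem f hf
    have hfx : f x ∈ LinearMap.range f := ⟨x, rfl⟩
    have hk : x - f x ∈ LinearMap.ker f := by
      have hh : f (f x) = f x := LinearMap.ext_iff.mp hf x
      simp [map_sub, hh]
    have hx : x = f x + (x - f x) := by abel
    show ((LinearMap.range f).projectionOnto (LinearMap.ker f) _ x : Fin n → F) = f x
    conv_lhs => rw [hx]
    rw [map_add, Submodule.projectionOnto_apply_of_mem_right _ hk, add_zero]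
    exact congrArg _ (Submodule.linearProjOfIsCompl_apply_left h ⟨f x, hfx⟩) |>.trans rfl
  right_inv := by
    rintro ⟨⟨U, W⟩, h⟩
    apply Subtype.ext
    dsimp only
    refine Prod.ext ?_ ?_
    · rw [LinearMap.range_comp, Submodule.range_projectionOnto, Submodule.map_subtype_top]
    · rw [LinearMap.ker_comp, Submodule.ker_subtype, Submodule.comap_bot,
        Submodule.ker_projectionOnto]

lemma card_idem_matrix (n : ℕ) (F : Type) [Field F] [Fintype F] :
    Nat.card {P : Matrix (Fin n) (Fin n) F // P * P = P} =
      Nat.card {p : Submodule F (Fin n → F) × Submodule F (Fin n → F) // IsCompl p.1 p.2} := by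
  refine Nat.card_congr (Equiv.trans ?_ (idemEquivPairs n F))
  refine Equiv.subtypeEquiv (Matrix.toLinAlgEquiv' (R := F) (n := Fin n)).toEquiv fun P => ?_
  set e := (Matrix.toLinAlgEquiv' (R := F) (n := Fin n))
  constructor
  · intro h
    show e P ∘ₗ e P = e P
    rw [← Module.End.mul_eq_comp, ← map_mul, h]
  · intro h
    apply e.injective
    rw [map_mul]
    exact (Module.End.mul_eq_comp (e P) (e P)).trans h

/-! ### Counting subspaces of a given dimension -/

lemma card_indep_tuples (q n j : ℕ) (F : Type) [Field F] [Fintype F]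
    (hF : Fintype.card F = q) (hj : j ≤ n) :
    Nat.card {s : Fin j → (Fin n → F) // LinearIndependent F s} =
      ∏ i ∈ Finset.range j, (q ^ n - q ^ i) := by
  have h := card_linearIndependent (K := F) (V := Fin n → F) (k := j)
    (by rw [Module.finrank_fintype_fun_eq_card, Fintype.card_fin]; exact hj)
  rw [h, hF, Module.finrank_fintype_fun_eq_card, Fintype.card_fin]
  exact Fin.prod_univ_eq_prod_range (fun i => q ^ n - q ^ i) j

lemma card_subspaces_mul (q n j : ℕ) (F : Type) [Field F] [Fintype F]
    (hF : Fintype.card F = q) (hj : j ≤ n) :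
    (∏ i ∈ Finset.range j, (q ^ n - q ^ i)) =
      gma q j * Nat.card {U : Submodule F (Fin n → F) // finrank F U = j} := by
  rw [← card_indep_tuples q n j F hF hj]
  refine card_eq_mul_card (fun s => (⟨Submodule.span F (Set.range s.1), by
      rw [finrank_span_eq_card s.2, Fintype.card_fin]⟩ :
        {U : Submodule F (Fin n → F) // finrank F U = j})) (gma q j) fun U => ?_
  have hU : finrank F U.1 = j := U.2
  have hcard : Nat.card {t : Fin j → U.1 // LinearIndependent F t} = gma q j := by
    have h2 := card_linearIndependent (K := F) (V := U.1) (k := j) (le_of_eq hU.symm)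
    rw [h2, hF, hU, gma]
    exact Fin.prod_univ_eq_prod_range (fun i => q ^ j - q ^ i) j
  rw [← hcard]
  apply Nat.card_congr
  refine ⟨fun s => ⟨fun i => ⟨s.1.1 i, ?_⟩, ?_⟩,
    fun t => ⟨⟨fun i => (t.1 i : Fin n → F), t.2.map' U.1.subtype (Submodule.ker_subtype _)⟩, ?_⟩,
    fun s => Subtype.ext (Subtype.ext (funext fun i => rfl)),
    fun t => Subtype.ext (funext fun i => Subtype.ext rfl)⟩
  · have hs : Submodule.span F (Set.range s.1.1) = U.1 := congrArg Subtype.val s.2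
    exact hs ▸ Submodule.subset_span ⟨i, rfl⟩
  · exact LinearIndependent.of_comp U.1.subtype (by exact s.1.2)
  · apply Subtype.ext
    show Submodule.span F (Set.range fun i => (t.1 i : Fin n → F)) = U.1
    have h1 : (Set.range fun i => (t.1 i : Fin n → F)) = U.1.subtype '' Set.range t.1 := by
      rw [← Set.range_comp]; rfl
    rw [h1, Submodule.span_image,
      t.2.span_eq_top_of_card_eq_finrank' (by rw [Fintype.card_fin, hU]),
      Submodule.map_subtype_top]

/-! ### Counting complements -/

/-- Projections onto `U` with `f|_U = id` are parametrized by maps `W0 →ₗ U`. -/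
noncomputable def projEquivMaps {F : Type} [Field F] {V : Type*} [AddCommGroup V] [Module F V]
    {U W0 : Submodule F V} (h : IsCompl U W0) :
    {f : V →ₗ[F] U // ∀ x : U, f x = x} ≃ (W0 →ₗ[F] U) where
  toFun f := f.1 ∘ₗ W0.subtype
  invFun φ := ⟨U.projectionOnto W0 h + φ ∘ₗ W0.projectionOnto U h.symm, fun x => by
    simp [Submodule.linearProjOfIsCompl_apply_left h x,
      Submodule.projectionOnto_apply_of_mem_right h.symm x.2]⟩
  left_inv f := by
    apply Subtype.ext
    apply LinearMap.ext; intro x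
    conv_rhs => rw [show x = ↑(U.projectionOnto W0 h x) +
      ↑(W0.projectionOnto U h.symm x) from
      (Submodule.projection_add_projection_eq_self h x).symm]
    rw [map_add, f.2 _]
    rfl
  right_inv φ := by
    apply LinearMap.ext; intro w
    simp [Submodule.projectionOnto_apply_of_mem_right h w.2,
      Submodule.linearProjOfIsCompl_apply_left h.symm w]

lemma card_compls (q n j : ℕ) (F : Type) [Field F] [Fintype F]
    (hF : Fintype.card F = q) (U : Submodule F (Fin n → F))
    (hU : finrank F U = j) :
    Nat.card {W : Submodule F (Fin n → F) // IsCompl U W} = q ^ (j * (n - j)) := by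
  obtain ⟨W0, hW0⟩ := U.exists_isCompl
  have hrk : finrank F U + finrank F W0 = n := by
    rw [Submodule.finrank_add_eq_of_isCompl hW0, Module.finrank_fintype_fun_eq_card,
      Fintype.card_fin]
  have hW0rk : finrank F W0 = n - j := by omega
  rw [Nat.card_congr ((U.isComplEquivProj).trans (projEquivMaps hW0))]
  rw [Nat.card_congr (LinearMap.toMatrix (Module.finBasis F W0) (Module.finBasis F U)).toEquiv]
  rw [Nat.card_eq_fintype_card]
  rw [show Fintype.card (Matrix (Fin (finrank F U)) (Fin (finrank F W0)) F) =
    Fintype.card (Fin (finrank F U) → Fin (finrank F W0) → F) from rfl]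
  simp only [Fintype.card_fun, Fintype.card_fin, hF, hU, hW0rk]
  rw [← pow_mul, Nat.mul_comm (n - j) j]

/-! ### Pairs of a given rank -/

/-- The number of ordered complementary pairs whose first component has dimension `j`. -/
noncomputable def Npair (n j : ℕ) (F : Type) [Field F] [Fintype F] : ℕ :=
  Nat.card {p : Submodule F (Fin n → F) × Submodule F (Fin n → F) //
    IsCompl p.1 p.2 ∧ finrank F p.1 = j}

lemma Npair_mul (q n j : ℕ) (F : Type) [Field F] [Fintype F]
    (hF : Fintype.card F = q) (hj : j ≤ n) :
    Npair n j F * (gma q j * gma q (n - j)) = gma q n := by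
  have e : {p : Submodule F (Fin n → F) × Submodule F (Fin n → F) //
        IsCompl p.1 p.2 ∧ finrank F p.1 = j} ≃
      (U : {U : Submodule F (Fin n → F) // finrank F U = j}) ×
        {W : Submodule F (Fin n → F) // IsCompl U.1 W} :=
    ⟨fun p => ⟨⟨p.1.1, p.2.2⟩, ⟨p.1.2, p.2.1⟩⟩, fun x => ⟨(x.1.1, x.2.1), x.2.2, x.1.2⟩,
     fun p => rfl, fun x => rfl⟩
  have hs := card_sigma_eq (ι := {U : Submodule F (Fin n → F) // finrank F U = j})
    (β := fun U => {W : Submodule F (Fin n → F) // IsCompl U.1 W})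
    (q ^ (j * (n - j))) (fun U => card_compls q n j F hF U.1 U.2)
  rw [Npair, Nat.card_congr e, hs]
  have hA := card_subspaces_mul q n j F hF hj
  have hsplit := gma_split q j (n - j)
  rw [Nat.add_sub_cancel' hj] at hsplit
  rw [hsplit, hA]
  ring

lemma Npair_zero (q n : ℕ) (F : Type) [Field F] [Fintype F]
    (hF : Fintype.card F = q) : Npair n 0 F = 1 := by
  have hq : 1 < q := hF ▸ Fintype.one_lt_card
  have h := Npair_mul q n 0 F hF (Nat.zero_le n)
  have h0 : gma q 0 = 1 := by simp [gma]
  rw [h0, one_mul, Nat.sub_zero] at h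
  have hpos := gma_pos q n hq
  nlinarith [h, hpos]

lemma Npair_top (q n : ℕ) (F : Type) [Field F] [Fintype F]
    (hF : Fintype.card F = q) : Npair n n F = 1 := by
  have hq : 1 < q := hF ▸ Fintype.one_lt_card
  have h := Npair_mul q n n F hF le_rfl
  have h0 : gma q (n - n) = 1 := by simp [gma]
  rw [h0, mul_one] at h
  have hpos := gma_pos q n hq
  nlinarith [h, hpos]

lemma card_pairs_eq_sum (n : ℕ) (F : Type) [Field F] [Fintype F] :
    Nat.card {p : Submodule F (Fin n → F) × Submodule F (Fin n → F) // IsCompl p.1 p.2} =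
      ∑ j ∈ Finset.range (n + 1), Npair n j F := by
  classical
  have hle : ∀ p : {p : Submodule F (Fin n → F) × Submodule F (Fin n → F) //
      IsCompl p.1 p.2}, finrank F p.1.1 < n + 1 := fun p =>
    Nat.lt_succ_of_le (by
      have h := Submodule.finrank_le p.1.1
      rwa [Module.finrank_fintype_fun_eq_card, Fintype.card_fin] at h)
  rw [card_eq_sum_card_fibers (fun p => (⟨finrank F p.1.1, hle p⟩ : Fin (n + 1)))]
  have hfib : ∀ b : Fin (n + 1),
      Nat.card {p : {p : Submodule F (Fin n → F) × Submodule F (Fin n → F) //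
          IsCompl p.1 p.2} // (⟨finrank F p.1.1, hle p⟩ : Fin (n + 1)) = b} =
        Npair n (b : ℕ) F := fun b =>
    Nat.card_congr ((Equiv.subtypeEquivRight (fun p => by
        simp [Fin.ext_iff])).trans
      (Equiv.subtypeSubtypeEquivSubtypeInter _ _))
  simp_rw [hfib]
  exact Fin.sum_univ_eq_sum_range (fun j => Npair n j F) (n + 1)

lemma card_pairsNZ_eq_sum (n : ℕ) (hn : 1 ≤ n) (F : Type) [Field F] [Fintype F] :
    Nat.card {p : Submodule F (Fin n → F) × Submodule F (Fin n → F) //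
        IsCompl p.1 p.2 ∧ p.1 ≠ ⊥ ∧ p.2 ≠ ⊥} =
      ∑ j ∈ Finset.Icc 1 (n - 1), Npair n j F := by
  classical
  have hle : ∀ p : {p : Submodule F (Fin n → F) × Submodule F (Fin n → F) //
      IsCompl p.1 p.2 ∧ p.1 ≠ ⊥ ∧ p.2 ≠ ⊥}, finrank F p.1.1 < n + 1 := fun p =>
    Nat.lt_succ_of_le (by
      have h := Submodule.finrank_le p.1.1
      rwa [Module.finrank_fintype_fun_eq_card, Fintype.card_fin] at h)
  rw [card_eq_sum_card_fibers (fun p => (⟨finrank F p.1.1, hle p⟩ : Fin (n + 1)))]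
  have hfib : ∀ b : Fin (n + 1),
      Nat.card {p : {p : Submodule F (Fin n → F) × Submodule F (Fin n → F) //
          IsCompl p.1 p.2 ∧ p.1 ≠ ⊥ ∧ p.2 ≠ ⊥} //
            (⟨finrank F p.1.1, hle p⟩ : Fin (n + 1)) = b} =
        Nat.card {p : Submodule F (Fin n → F) × Submodule F (Fin n → F) //
          (IsCompl p.1 p.2 ∧ p.1 ≠ ⊥ ∧ p.2 ≠ ⊥) ∧ finrank F p.1 = (b : ℕ)} := fun b =>
    Nat.card_congr ((Equiv.subtypeEquivRight (fun p => by
        simp [Fin.ext_iff])).trans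
      (Equiv.subtypeSubtypeEquivSubtypeInter _ _))
  simp_rw [hfib]
  rw [Fin.sum_univ_eq_sum_range (fun j =>
    Nat.card {p : Submodule F (Fin n → F) × Submodule F (Fin n → F) //
      (IsCompl p.1 p.2 ∧ p.1 ≠ ⊥ ∧ p.2 ≠ ⊥) ∧ finrank F p.1 = j}) (n + 1)]
  have hsub : Finset.Icc 1 (n - 1) ⊆ Finset.range (n + 1) := by
    intro j hj
    rw [Finset.mem_Icc] at hj
    rw [Finset.mem_range]
    omega
  have hzero : ∀ j ∈ Finset.range (n + 1), j ∉ Finset.Icc 1 (n - 1) →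
      Nat.card {p : Submodule F (Fin n → F) × Submodule F (Fin n → F) //
        (IsCompl p.1 p.2 ∧ p.1 ≠ ⊥ ∧ p.2 ≠ ⊥) ∧ finrank F p.1 = j} = 0 := by
    intro j hj hj'
    rw [Finset.mem_range] at hj
    rw [Finset.mem_Icc] at hj'
    have : IsEmpty {p : Submodule F (Fin n → F) × Submodule F (Fin n → F) //
        (IsCompl p.1 p.2 ∧ p.1 ≠ ⊥ ∧ p.2 ≠ ⊥) ∧ finrank F p.1 = j} := by
      constructor
      rintro ⟨p, ⟨hc, h1, h2⟩, hrk⟩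
      have hsum : finrank F p.1 + finrank F p.2 = n := by
        rw [Submodule.finrank_add_eq_of_isCompl hc, Module.finrank_fintype_fun_eq_card,
          Fintype.card_fin]
      rcases Nat.eq_zero_or_pos j with rfl | hjpos
      · exact h1 (Submodule.finrank_eq_zero.mp hrk)
      · have hjn : n - 1 < j := by
          by_contra hcon
          exact hj' ⟨hjpos, by omega⟩
        have hj2 : finrank F p.2 = 0 := by omega
        exact h2 (Submodule.finrank_eq_zero.mp hj2)
    exact Nat.card_of_isEmpty
  rw [← Finset.sum_subset hsub hzero]
  refine Finset.sum_congr rfl fun j hj => ?_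
  rw [Finset.mem_Icc] at hj
  refine Nat.card_congr (Equiv.subtypeEquivRight fun p => ?_)
  constructor
  · rintro ⟨⟨hc, _, _⟩, hrk⟩; exact ⟨hc, hrk⟩
  · rintro ⟨hc, hrk⟩
    have hsum : finrank F p.1 + finrank F p.2 = n := by
      rw [Submodule.finrank_add_eq_of_isCompl hc, Module.finrank_fintype_fun_eq_card,
        Fintype.card_fin]
    refine ⟨⟨hc, ?_, ?_⟩, hrk⟩
    · intro hbot
      rw [hbot, finrank_bot] at hrk
      omega
    · intro hbot
      rw [hbot, finrank_bot] at hsum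
      omega

lemma card_pairsNZ_eq_two_mul (n : ℕ) (F : Type) [Field F] [Fintype F] :
    Nat.card {p : Submodule F (Fin n → F) × Submodule F (Fin n → F) //
        IsCompl p.1 p.2 ∧ p.1 ≠ ⊥ ∧ p.2 ≠ ⊥} = 2 * qStirlingTwo n F := by
  classical
  have key : ∀ (U W : Submodule F (Fin n → F)), IsCompl U W → U ≠ ⊥ → W ≠ ⊥ →
      ({U, W} : Finset (Submodule F (Fin n → F))).card = 2 ∧
      (∀ V ∈ ({U, W} : Finset (Submodule F (Fin n → F))), V ≠ ⊥) ∧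
      sSupIndep (({U, W} : Finset (Submodule F (Fin n → F))) : Set (Submodule F (Fin n → F))) ∧
      sSup (({U, W} : Finset (Submodule F (Fin n → F))) : Set (Submodule F (Fin n → F))) = ⊤ := by
    intro U W hc hU hW
    have hne : U ≠ W := by
      rintro rfl
      exact hU (disjoint_self.mp hc.disjoint)
    have hcoe : (({U, W} : Finset (Submodule F (Fin n → F))) : Set (Submodule F (Fin n → F)))
        = {U, W} := by simp
    refine ⟨Finset.card_pair hne, ?_, ?_, ?_⟩
    · intro X hX
      rcases Finset.mem_insert.mp hX with rfl | hX
      · exact hU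
      · rw [Finset.mem_singleton] at hX; subst hX; exact hW
    · rw [hcoe]
      intro a ha
      rcases ha with rfl | ha
      · rw [Set.pair_diff_left hne, sSup_singleton]
        exact hc.disjoint
      · rw [Set.mem_singleton_iff] at ha; subst ha
        rw [Set.pair_diff_right hne, sSup_singleton]
        exact hc.disjoint.symm
    · rw [hcoe, sSup_pair]
      exact hc.codisjoint.eq_top
  rw [qStirlingTwo]
  refine card_eq_mul_card
    (fun p => ⟨{p.1.1, p.1.2}, key p.1.1 p.1.2 p.2.1 p.2.2.1 p.2.2.2⟩) 2 fun D => ?_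
  obtain ⟨U, W, hUW, hD⟩ := Finset.card_eq_two.mp D.2.1
  have hU : U ≠ ⊥ := D.2.2.1 U (by rw [hD]; exact Finset.mem_insert_self _ _)
  have hW : W ≠ ⊥ := D.2.2.1 W (by rw [hD]; simp)
  have hcoe : ((D.1 : Finset (Submodule F (Fin n → F))) : Set (Submodule F (Fin n → F)))
      = {U, W} := by rw [hD]; simp
  have hdisj : Disjoint U W := by
    have hssi : sSupIndep ((D.1 : Finset (Submodule F (Fin n → F))) :
        Set (Submodule F (Fin n → F))) := D.2.2.2.1
    have h := hssi (a := U) (by rw [hcoe]; exact Set.mem_insert _ _)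
    rwa [hcoe, Set.pair_diff_left hUW, sSup_singleton] at h
  have hcod : U ⊔ W = ⊤ := by
    have h := D.2.2.2.2
    rwa [hcoe, sSup_pair] at h
  have hcompl : IsCompl U W := ⟨hdisj, codisjoint_iff.mpr hcod⟩
  set g : Bool → {p : {p : Submodule F (Fin n → F) × Submodule F (Fin n → F) //
      IsCompl p.1 p.2 ∧ p.1 ≠ ⊥ ∧ p.2 ≠ ⊥} //
        (fun p => (⟨{p.1.1, p.1.2}, key p.1.1 p.1.2 p.2.1 p.2.2.1 p.2.2.2⟩ :
          {D : Finset (Submodule F (Fin n → F)) //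
            D.card = 2 ∧ (∀ V ∈ D, V ≠ ⊥) ∧
            sSupIndep (D : Set (Submodule F (Fin n → F))) ∧
            sSup (D : Set (Submodule F (Fin n → F))) = ⊤})) p = D} := fun b =>
    if b then ⟨⟨(U, W), hcompl, hU, hW⟩, Subtype.ext hD.symm⟩
    else ⟨⟨(W, U), hcompl.symm, hW, hU⟩, Subtype.ext ((Finset.pair_comm W U).trans hD.symm)⟩
    with hg
  have hbij : Function.Bijective g := by
    constructor
    · intro b b' hbb
      cases b <;> cases b' <;> simp only [hg, if_true, if_false, Bool.false_eq_true] at hbb ⊢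
      · have h1 : W = U := congrArg (fun x => x.1.1.1) hbb
        exact absurd h1.symm hUW
      · have h1 : U = W := congrArg (fun x => x.1.1.1) hbb
        exact absurd h1 hUW
    · rintro ⟨⟨⟨A, B⟩, hAB, hA, hB⟩, hfD⟩
      have hDD : ({A, B} : Finset (Submodule F (Fin n → F))) = D.1 :=
        congrArg Subtype.val hfD
      have hABne : A ≠ B := by
        rintro rfl
        exact hA (disjoint_self.mp hAB.disjoint)
      have hAmem : A ∈ ({U, W} : Finset (Submodule F (Fin n → F))) := by
        rw [← hD, ← hDD]; exact Finset.mem_insert_self _ _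
      have hBmem : B ∈ ({U, W} : Finset (Submodule F (Fin n → F))) := by
        rw [← hD, ← hDD]; simp
      rcases Finset.mem_insert.mp hAmem with hAU | hAW
      · have hBW : B = W := by
          rcases Finset.mem_insert.mp hBmem with hBU | hBW
          · exact absurd (hAU.trans hBU.symm) hABne
          · exact Finset.mem_singleton.mp hBW
        refine ⟨true, ?_⟩
        apply Subtype.ext
        apply Subtype.ext
        simp only [hg, if_true]
        exact Prod.ext hAU.symm hBW.symm
      · have hAW' : A = W := Finset.mem_singleton.mp hAW
        have hBU : B = U := by
          rcases Finset.mem_insert.mp hBmem with hBU | hBW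
          · exact hBU
          · exact absurd (hAW'.trans (Finset.mem_singleton.mp hBW).symm) hABne
        refine ⟨false, ?_⟩
        apply Subtype.ext
        apply Subtype.ext
        simp only [hg, if_false, Bool.false_eq_true]
        exact Prod.ext hAW'.symm hBU.symm
  have hcard := Nat.card_congr (Equiv.ofBijective g hbij)
  rw [← hcard]
  simp [Nat.card_eq_fintype_card]

end Aux

/-- `{n brace 2}_q = (1/2) Σ_{j=1}^{n-1} γ_n/(γ_j γ_{n-j})`, and the number of `n × n`
idempotent matrices over `F_q` equals `2 {n brace 2}_q + 2`. -/
theorem qStirlingTwo_and_projections (q n : ℕ) (hn : 1 ≤ n)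
    (F : Type) [Field F] [Fintype F] (hF : Fintype.card F = q) :
    (qStirlingTwo n F : ℚ) =
      (1 / 2 : ℚ) * ∑ j ∈ Finset.Icc 1 (n - 1), (gma q n : ℚ) / (gma q j * gma q (n - j)) ∧
    Nat.card {P : Matrix (Fin n) (Fin n) F // P * P = P} =
      2 * qStirlingTwo n F + 2 := by
  have hq : 1 < q := hF ▸ Fintype.one_lt_card
  have hT : ∑ j ∈ Finset.Icc 1 (n - 1), Npair n j F = 2 * qStirlingTwo n F := by
    rw [← card_pairsNZ_eq_sum n hn F, card_pairsNZ_eq_two_mul n F]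
  have hsplitsum : ∑ j ∈ Finset.range (n + 1), Npair n j F =
      Npair n 0 F + (∑ j ∈ Finset.Icc 1 (n - 1), Npair n j F) + Npair n n F := by
    have h1 := Finset.sum_range_succ (fun j => Npair n j F) n
    have h2 : ∑ j ∈ Finset.range n, Npair n j F =
        Npair n 0 F + ∑ j ∈ Finset.Ico 1 n, Npair n j F := by
      rw [Finset.range_eq_Ico]
      exact Finset.sum_eq_sum_Ico_succ_bot (by omega : (0:ℕ) < n) _
    have hIco : Finset.Ico 1 n = Finset.Icc 1 (n - 1) := by
      rw [← Finset.Ico_add_one_right_eq_Icc]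
      congr 1
      omega
    rw [h1, h2, hIco]
  have hidem : Nat.card {P : Matrix (Fin n) (Fin n) F // P * P = P} =
      2 * qStirlingTwo n F + 2 := by
    rw [card_idem_matrix n F, card_pairs_eq_sum n F, hsplitsum,
      Npair_zero q n F hF, Npair_top q n F hF, hT]
    omega
  refine ⟨?_, hidem⟩
  have hcast : ∀ j ∈ Finset.Icc 1 (n - 1),
      ((gma q n : ℚ) / (gma q j * gma q (n - j))) = ((Npair n j F : ℕ) : ℚ) := by
    intro j hj
    rw [Finset.mem_Icc] at hj
    have hjn : j ≤ n := by omega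
    have hmul := Npair_mul q n j F hF hjn
    have hd1 : (0:ℚ) < (gma q j : ℚ) := by exact_mod_cast gma_pos q j hq
    have hd2 : (0:ℚ) < (gma q (n - j) : ℚ) := by exact_mod_cast gma_pos q (n - j) hq
    rw [eq_comm, eq_div_iff (by positivity)]
    exact_mod_cast hmul
  have hsum : ∑ j ∈ Finset.Icc 1 (n - 1), (gma q n : ℚ) / (gma q j * gma q (n - j)) =
      ((2 * qStirlingTwo n F : ℕ) : ℚ) := by
    rw [Finset.sum_congr rfl hcast, ← hT]
    push_cast
    try rfl
  rw [hsum]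
  push_cast
  ring
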